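/- The linear code D_I ⊆ Z_{2^k}^n generated by the rows of B_I (equivalently, D_I = H_I^⊥) has cardinality n·2^k and minimum d*-distance n·2^{k-2}; consequently φ(D_I) is a binary Hadamard (n·2^{k-1}, n·2^k, n·2^{k-2}) code. -/

import Mathlib

/-- `wt*` on `Z_{2^k}`. -/
def wtStarK (k : ℕ) (x : ZMod (2 ^ k)) : ℕ :=
  if x = 0 then 0 else if x = (2 ^ (k - 1) : ZMod (2 ^ k)) then 2 ^ (k - 1) else 2 ^ (k - 2)

/-- The induced distance `d*` on `Z_{2^k}^n`. -/
def dStarK (k n : ℕ) (x y : Fin n → ZMod (2 ^ k)) : ℕ :=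
  ∑ i, wtStarK k (y i - x i)

/-- Index type for the rows of `B_I`. -/
def colIdx (k : ℕ) (I : Fin k → ℕ) : Type :=
  Unit ⊕ (Σ j : Fin k, Fin (I j))

instance (k : ℕ) (I : Fin k → ℕ) : Fintype (colIdx k I) := by
  unfold colIdx; infer_instance

/-- The set `{1} × (2^{k-1}Z_{2^k})^{i_1} × … × (2^0 Z_{2^k})^{i_k}` of columns of `B_I`. -/
def colSet (k : ℕ) (I : Fin k → ℕ) : Set (colIdx k I → ZMod (2 ^ k)) :=
  {v | v (Sum.inl ()) = 1 ∧
    ∀ (j : Fin k) (t : Fin (I j)),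
      ∃ c : ZMod (2 ^ k), v (Sum.inr ⟨j, t⟩) = (2 ^ (k - 1 - j.val) : ZMod (2 ^ k)) * c}

section
variable {k r : ℕ} {I : Fin k → ℕ}

lemma sum_colIdx {M : Type*} [AddCommMonoid M] (F : colIdx k I → M) :
    ∑ t, F t = F (Sum.inl ()) + ∑ p : (Σ j : Fin k, Fin (I j)), F (Sum.inr p) := by
  exact (Fintype.sum_sum_type (α₁ := Unit) (α₂ := Σ j : Fin k, Fin (I j)) F).trans (by simp)

variable (b : Fin (2 ^ r) → colIdx k I → ZMod (2 ^ k))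

lemma col_mem (hb_range : Set.range b = colSet k I) (i : Fin (2^r)) : b i ∈ colSet k I := hb_range ▸ Set.mem_range_self i

lemma col_inl (hb_range : Set.range b = colSet k I) (i : Fin (2^r)) : b i (Sum.inl ()) = 1 := (col_mem b hb_range i).1

lemma col_inr (hb_range : Set.range b = colSet k I) (i : Fin (2^r)) (p : Σ j : Fin k, Fin (I j)) :
    ∃ c, b i (Sum.inr p) = (2 : ZMod (2^k)) ^ (k - 1 - p.1.val) * c :=
  (col_mem b hb_range i).2 p.1 p.2

lemma mem_colSet_of (v : colIdx k I → ZMod (2^k)) (h1 : v (Sum.inl ()) = 1)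
    (h2 : ∀ p : Σ j : Fin k, Fin (I j), ∃ c, v (Sum.inr p) = (2:ZMod (2^k)) ^ (k-1-p.1.val) * c) :
    v ∈ colSet k I :=
  ⟨h1, fun j t => h2 ⟨j, t⟩⟩

lemma repr_of_mem {z : Fin (2^r) → ZMod (2^k)}
    (hz : z ∈ Submodule.span (ZMod (2 ^ k))
      (Set.range fun t : colIdx k I => fun i : Fin (2 ^ r) => b i t)) :
    ∃ c : colIdx k I → ZMod (2^k), ∀ i, z i = ∑ t, c t * b i t := by
  rw [Submodule.mem_span_range_iff_exists_fun] at hz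
  obtain ⟨c, hc⟩ := hz
  refine ⟨c, fun i => ?_⟩
  rw [← hc]
  simp [Finset.sum_apply]

lemma comb_mem (c : colIdx k I → ZMod (2^k)) :
    (fun i => ∑ t, c t * b i t) ∈ Submodule.span (ZMod (2 ^ k))
      (Set.range fun t : colIdx k I => fun i : Fin (2 ^ r) => b i t) := by
  rw [Submodule.mem_span_range_iff_exists_fun]
  refine ⟨c, ?_⟩
  funext i
  simp [Finset.sum_apply]

lemma translateCol (hb_range : Set.range b = colSet k I) (w : colIdx k I → ZMod (2^k)) (hw0 : w (Sum.inl ()) = 0)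
    (hw : ∀ p : Σ j : Fin k, Fin (I j), ∃ c, w (Sum.inr p) = (2:ZMod (2^k)) ^ (k-1-p.1.val) * c)
    (i : Fin (2^r)) : ∃ i', b i' = fun t => b i t + w t := by
  have : (fun t => b i t + w t) ∈ colSet k I := by
    refine mem_colSet_of _ ?_ ?_
    · rw [col_inl b hb_range, hw0, add_zero]
    · intro p
      obtain ⟨c1, hc1⟩ := col_inr b hb_range i p
      obtain ⟨c2, hc2⟩ := hw p
      exact ⟨c1 + c2, by rw [hc1, hc2, mul_add]⟩
  rw [← hb_range] at this
  exact this

lemma pow_ne_zero' (hk : 2 ≤ k) : ((2 : ZMod (2^k)) ^ (k-1)) ≠ 0 := by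
  haveI : NeZero (2^k) := ⟨by positivity⟩
  intro h
  have h2 : (((2^(k-1) : ℕ)) : ZMod (2^k)) = 0 := by push_cast; exact h
  rw [ZMod.natCast_eq_zero_iff] at h2
  have h3 := Nat.le_of_dvd (by positivity) h2
  have h4 : 2^(k-1) < 2^k := Nat.pow_lt_pow_right one_lt_two (by omega)
  omega

lemma order_two (hk : 2 ≤ k) (x : ZMod (2^k)) (hx : 2 * x = 0) :
    x = 0 ∨ x = 2 ^ (k-1) := by
  haveI : NeZero (2^k) := ⟨by positivity⟩
  have hv : ((x.val : ℕ) : ZMod (2^k)) = x := by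
    simp [ZMod.natCast_val, ZMod.cast_id]
  have h2 : (((2 * x.val : ℕ)) : ZMod (2^k)) = 0 := by push_cast [hv]; exact hx
  rw [ZMod.natCast_eq_zero_iff] at h2
  have hk2 : 2^k = 2 * 2^(k-1) := by
    rw [← pow_succ']
    congr 1; omega
  have hdvd : 2^(k-1) ∣ x.val := by
    rcases h2 with ⟨q, hq⟩
    refine ⟨q, ?_⟩
    have h5 : 2 * x.val = 2 * (2^(k-1) * q) := by rw [hq, hk2]; ring
    omega
  obtain ⟨q, hq⟩ := hdvd
  have hlt : x.val < 2^k := x.val_lt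
  have hp : 0 < 2^(k-1) := by positivity
  have : q = 0 ∨ q = 1 := by
    rcases Nat.lt_or_ge q 2 with h | h
    · omega
    · exfalso; nlinarith
  rcases this with h | h
  · left; rw [← hv, hq, h]; simp
  · right; rw [← hv, hq, h, mul_one]; push_cast; ring

lemma exists_mul_eq (hk : 2 ≤ k) (m : ZMod (2^k)) (hm : m ≠ 0) :
    ∃ c : ZMod (2^k), c * m = 2 ^ (k-1) := by
  haveI : NeZero (2^k) := ⟨by positivity⟩
  have hPk : (2 : ZMod (2^k)) ^ k * m = 0 := by
    have : ((2^k : ℕ) : ZMod (2^k)) = 0 := by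
      rw [ZMod.natCast_eq_zero_iff]
    push_cast at this
    rw [this, zero_mul]
  have hex : ∃ j, (2 : ZMod (2^k)) ^ j * m = 0 := ⟨k, hPk⟩
  classical
  set j0 := Nat.find hex with hj0
  have hj0spec := Nat.find_spec hex
  have hj0pos : j0 ≠ 0 := by
    intro h
    rw [← hj0] at hj0spec
    rw [h] at hj0spec
    simp at hj0spec
    exact hm hj0spec
  have hmin := Nat.find_min hex (show j0 - 1 < j0 by omega)
  have h2x : 2 * ((2:ZMod (2^k)) ^ (j0-1) * m) = 0 := by
    rw [← mul_assoc, ← pow_succ']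
    have : j0 - 1 + 1 = j0 := by omega
    rw [this]
    exact hj0spec
  rcases order_two hk _ h2x with h | h
  · exact absurd h hmin
  · exact ⟨2 ^ (j0-1), h⟩




lemma min_dist (hk : 2 ≤ k) (hb_inj : Function.Injective b)
    (hb_range : Set.range b = colSet k I)
    {z : Fin (2^r) → ZMod (2^k)}
    (hz : z ∈ Submodule.span (ZMod (2 ^ k))
      (Set.range fun t : colIdx k I => fun i : Fin (2 ^ r) => b i t))
    (hz0 : z ≠ 0) :
    2^r * 2^(k-2) ≤ ∑ i, wtStarK k (z i) := by
  classical
  obtain ⟨c, hc⟩ := repr_of_mem b hz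
  set S0 := Finset.univ.filter (fun i => z i = 0) with hS0
  set Sh := Finset.univ.filter (fun i => z i = (2:ZMod (2^k))^(k-1)) with hSh
  have hcard : S0.card ≤ Sh.card := by
    rcases S0.eq_empty_or_nonempty with h | h
    · simp [h]
    · obtain ⟨i0, hi0⟩ := h
      have hzi0 : z i0 = 0 := by
        rw [hS0, Finset.mem_filter] at hi0; exact hi0.2
      obtain ⟨i1, hi1⟩ : ∃ i1, z i1 ≠ 0 := by
        by_contra h'
        push_neg at h'
        exact hz0 (funext h')
      have hm : z i1 = ∑ t, c t * (b i1 t - b i0 t) := by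
        have h5 : (∑ t, c t * (b i1 t - b i0 t))
            = (∑ t, c t * b i1 t) - (∑ t, c t * b i0 t) := by
          rw [← Finset.sum_sub_distrib]
          exact Finset.sum_congr rfl (fun t _ => by ring)
        rw [h5, ← hc i1, ← hc i0, hzi0, sub_zero]
      obtain ⟨c', hc'⟩ := exists_mul_eq hk (z i1) hi1
      set w : colIdx k I → ZMod (2^k) := fun t => c' * (b i1 t - b i0 t) with hw
      have hw0 : w (Sum.inl ()) = 0 := by
        simp only [hw, col_inl b hb_range]; ring
      have hwp : ∀ p : Σ j : Fin k, Fin (I j),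
          ∃ d, w (Sum.inr p) = (2:ZMod (2^k))^(k-1-p.1.val) * d := by
        intro p
        obtain ⟨d1, hd1⟩ := col_inr b hb_range i1 p
        obtain ⟨d2, hd2⟩ := col_inr b hb_range i0 p
        refine ⟨c' * (d1 - d2), ?_⟩
        simp only [hw]; rw [hd1, hd2]; ring
      have hwsum : (∑ t, c t * w t) = (2:ZMod (2^k))^(k-1) := by
        have h6 : (∑ t, c t * w t) = c' * ∑ t, c t * (b i1 t - b i0 t) := by
          rw [Finset.mul_sum]
          exact Finset.sum_congr rfl (fun t _ => by simp only [hw]; ring)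
        rw [h6, ← hm, hc']
      have hσ : ∀ i, ∃ i', b i' = fun t => b i t + w t :=
        translateCol b hb_range w hw0 hwp
      choose σ hσ using hσ
      have hzσ : ∀ i, z (σ i) = z i + (2:ZMod (2^k))^(k-1) := by
        intro i
        rw [hc (σ i)]
        calc (∑ t, c t * b (σ i) t) = ∑ t, (c t * b i t + c t * w t) := by
              refine Finset.sum_congr rfl (fun t _ => ?_)
              rw [congrFun (hσ i) t]; ring
          _ = (∑ t, c t * b i t) + ∑ t, c t * w t := Finset.sum_add_distrib
          _ = z i + (2:ZMod (2^k))^(k-1) := by rw [← hc i, hwsum]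
      apply Finset.card_le_card_of_injOn σ
      · intro i hi
        rw [hS0, Finset.mem_coe, Finset.mem_filter] at hi
        rw [hSh, Finset.mem_coe, Finset.mem_filter]
        exact ⟨Finset.mem_univ _, by rw [hzσ i, hi.2, zero_add]⟩
      · intro i _ i' _ hii
        apply hb_inj
        funext t
        have h7 : (fun t => b i t + w t) = fun t => b i' t + w t := by
          rw [← hσ i, ← hσ i', hii]
        exact add_right_cancel (congrFun h7 t)
  have hne : ((2:ZMod (2^k))^(k-1)) ≠ 0 := pow_ne_zero' hk
  have hpow : 2^(k-2) * 2 = 2^(k-1) := by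
    rw [← pow_succ]; congr 1; omega
  have hbound : ∀ i, 2^(k-2) * ((if z i = 0 then 0 else 1)
      + (if z i = (2:ZMod (2^k))^(k-1) then 1 else 0)) ≤ wtStarK k (z i) := by
    intro i
    unfold wtStarK
    by_cases h0 : z i = 0
    · have h1 : ¬ (z i = (2:ZMod (2^k))^(k-1)) := by
        rw [h0]; exact fun h => hne h.symm
      simp only [if_pos h0, if_neg h1]
      simp
    · by_cases hh : z i = (2:ZMod (2^k))^(k-1)
      · simp only [if_neg h0, if_pos hh]
        omega
      · simp only [if_neg h0, if_neg hh]
        omega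
  have sum1 : 2^r ≤ ∑ i, ((if z i = 0 then 0 else 1)
      + (if z i = (2:ZMod (2^k))^(k-1) then 1 else 0)) := by
    rw [Finset.sum_add_distrib]
    have e1 : (Finset.univ.filter (fun i => ¬ z i = 0)).card
        = (∑ i, (if z i = 0 then 0 else 1)) := by
      rw [Finset.card_filter]
      exact Finset.sum_congr rfl (fun i _ => by by_cases h : z i = 0 <;> simp [h])
    have e2 : Sh.card = (∑ i, (if z i = (2:ZMod (2^k))^(k-1) then 1 else 0)) := by
      rw [hSh, Finset.card_filter]
    have e3 := Finset.card_filter_add_card_filter_not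
      (s := (Finset.univ : Finset (Fin (2^r)))) (p := fun i => z i = 0)
    have e4 : (Finset.univ : Finset (Fin (2^r))).card = 2^r := by simp
    rw [← e1, ← e2]
    rw [hS0] at hcard
    omega
  calc 2^r * 2^(k-2) = 2^(k-2) * 2^r := mul_comm _ _
    _ ≤ 2^(k-2) * ∑ i, ((if z i = 0 then 0 else 1)
        + (if z i = (2:ZMod (2^k))^(k-1) then 1 else 0)) := Nat.mul_le_mul_left _ sum1
    _ = ∑ i, 2^(k-2) * ((if z i = 0 then 0 else 1)
        + (if z i = (2:ZMod (2^k))^(k-1) then 1 else 0)) := Finset.mul_sum _ _ _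
    _ ≤ ∑ i, wtStarK k (z i) := Finset.sum_le_sum (fun i _ => hbound i)


lemma card_D (hk : 2 ≤ k) (hb_inj : Function.Injective b)
    (hb_range : Set.range b = colSet k I) :
    Nat.card (Submodule.span (ZMod (2 ^ k))
      (Set.range fun t : colIdx k I => fun i : Fin (2 ^ r) => b i t)) = 2^r * 2^k := by
  classical
  haveI : NeZero (2^k) := ⟨by positivity⟩
  set D := Submodule.span (ZMod (2 ^ k))
    (Set.range fun t : colIdx k I => fun i : Fin (2 ^ r) => b i t) with hD
  obtain ⟨i0, hi0⟩ : ∃ i0, b i0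
      = (Sum.elim (fun _ => (1:ZMod (2^k))) (fun _ => 0) : colIdx k I → ZMod (2^k)) := by
    have h : (Sum.elim (fun _ => (1:ZMod (2^k))) (fun _ => 0) : colIdx k I → ZMod (2^k))
        ∈ colSet k I := mem_colSet_of _ rfl (fun p => ⟨0, by simp⟩)
    rw [← hb_range] at h
    obtain ⟨i, hi⟩ := h
    exact ⟨i, hi⟩
  have hEx : ∀ p : Σ j : Fin k, Fin (I j), ∃ i, b i
      = (Sum.elim (fun _ => (1:ZMod (2^k)))
          (fun q => if q = p then (2:ZMod (2^k))^(k-1-p.1.val) else 0)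
        : colIdx k I → ZMod (2^k)) := by
    intro p
    have h : (Sum.elim (fun _ => (1:ZMod (2^k)))
          (fun q => if q = p then (2:ZMod (2^k))^(k-1-p.1.val) else 0)
        : colIdx k I → ZMod (2^k)) ∈ colSet k I := by
      refine mem_colSet_of _ rfl (fun q => ?_)
      by_cases hq : q = p
      · subst hq
        exact ⟨1, by simp⟩
      · exact ⟨0, by simp [hq]⟩
    rw [← hb_range] at h
    obtain ⟨i, hi⟩ := h
    exact ⟨i, hi⟩
  choose iE hiE using hEx
  have eval0 : ∀ (c : colIdx k I → ZMod (2^k)), (∑ t, c t * b i0 t) = c (Sum.inl ()) := by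
    intro c
    rw [sum_colIdx, hi0]
    simp
  have evalE : ∀ (c : colIdx k I → ZMod (2^k)) (p), (∑ t, c t * b (iE p) t)
      = c (Sum.inl ()) + c (Sum.inr p) * (2:ZMod (2^k))^(k-1-p.1.val) := by
    intro c p
    rw [sum_colIdx, hiE p]
    simp only [Sum.elim_inl, Sum.elim_inr, mul_one]
    congr 1
    rw [Fintype.sum_eq_single p (fun q hq => by simp [hq])]
    simp
  choose m hmspec using fun i p => col_inr b hb_range i p
  have recon : ∀ z ∈ D, ∀ i, z i
      = z i0 + ∑ p : (Σ j : Fin k, Fin (I j)), m i p * (z (iE p) - z i0) := by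
    intro z hz i
    obtain ⟨c, hc⟩ := repr_of_mem b hz
    have hz0 : z i0 = c (Sum.inl ()) := by rw [hc i0, eval0]
    have hzE : ∀ p, z (iE p) - z i0
        = c (Sum.inr p) * (2:ZMod (2^k))^(k-1-p.1.val) := by
      intro p; rw [hc (iE p), evalE, hz0]; ring
    rw [hc i, sum_colIdx, col_inl b hb_range i, mul_one]
    congr 1
    · exact hz0.symm
    · refine Finset.sum_congr rfl (fun p _ => ?_)
      rw [hzE p, hmspec i p]; ring
  have hinj : Set.InjOn (fun z : Fin (2^r) → ZMod (2^k) =>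
      (Sum.elim (fun _ => z i0) (fun p => z (iE p) - z i0) : colIdx k I → ZMod (2^k)))
      (D : Set _) := by
    intro z hz z' hz' hzz
    have h1 : z i0 = z' i0 := congrFun hzz (Sum.inl ())
    have h2 : ∀ p, z (iE p) - z i0 = z' (iE p) - z' i0 := fun p => congrFun hzz (Sum.inr p)
    funext i
    rw [recon z hz i, recon z' hz' i, h1]
    refine congrArg _ (Finset.sum_congr rfl (fun p _ => ?_))
    have h3 := h2 p
    rw [h1] at h3
    rw [h3]
  have himg : (fun z : Fin (2^r) → ZMod (2^k) =>
        (Sum.elim (fun _ => z i0) (fun p => z (iE p) - z i0) : colIdx k I → ZMod (2^k)))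
        '' (D : Set _)
      = (fun ai : ZMod (2^k) × Fin (2^r) =>
          (Sum.elim (fun _ => ai.1) (fun p => b ai.2 (Sum.inr p)) : colIdx k I → ZMod (2^k)))
        '' Set.univ := by
    ext v
    constructor
    · rintro ⟨z, hz, rfl⟩
      obtain ⟨c, hc⟩ := repr_of_mem b hz
      have hcol : (Sum.elim (fun _ => (1:ZMod (2^k)))
            (fun p => c (Sum.inr p) * (2:ZMod (2^k))^(k-1-p.1.val))
          : colIdx k I → ZMod (2^k)) ∈ colSet k I :=
        mem_colSet_of _ rfl (fun p => ⟨c (Sum.inr p), mul_comm _ _⟩)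
      rw [← hb_range] at hcol
      obtain ⟨i, hi⟩ := hcol
      refine ⟨(z i0, i), Set.mem_univ _, ?_⟩
      funext t
      rcases t with u | p
      · rfl
      · show b i (Sum.inr p) = z (iE p) - z i0
        rw [hi]
        show c (Sum.inr p) * (2:ZMod (2^k))^(k-1-p.1.val) = z (iE p) - z i0
        rw [hc (iE p), hc i0, eval0, evalE]
        ring
    · rintro ⟨⟨α, i⟩, -, rfl⟩
      refine ⟨fun i' => ∑ t, (Sum.elim (fun _ => α) (fun p => m i p)
          : colIdx k I → ZMod (2^k)) t * b i' t, comb_mem b _, ?_⟩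
      funext t
      rcases t with u | p
      · show (∑ t : colIdx k I, (Sum.elim (fun _ => α) (fun p => m i p)
            : colIdx k I → ZMod (2^k)) t * b i0 t) = α
        exact eval0 _
      · show (∑ t : colIdx k I, (Sum.elim (fun _ => α) (fun q => m i q)
              : colIdx k I → ZMod (2^k)) t * b (iE p) t)
            - (∑ t : colIdx k I, (Sum.elim (fun _ => α) (fun q => m i q)
              : colIdx k I → ZMod (2^k)) t * b i0 t)
            = b i (Sum.inr p)
        have e1 := eval0 (Sum.elim (fun _ => α) (fun q => m i q))
        have e2 := evalE (Sum.elim (fun _ => α) (fun q => m i q)) p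
        simp only [Sum.elim_inl, Sum.elim_inr] at e1 e2
        linear_combination e2 - e1 - hmspec i p
  have hχinj : Function.Injective (fun ai : ZMod (2^k) × Fin (2^r) =>
      (Sum.elim (fun _ => ai.1) (fun p => b ai.2 (Sum.inr p)) : colIdx k I → ZMod (2^k))) := by
    rintro ⟨α, i⟩ ⟨α', i'⟩ h
    have h1 : α = α' := congrFun h (Sum.inl ())
    have h2 : b i = b i' := by
      funext t
      rcases t with u | p
      · cases u
        rw [col_inl b hb_range, col_inl b hb_range]
      · exact congrFun h (Sum.inr p)
    rw [h1, hb_inj h2]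
  calc Nat.card D = (D : Set (Fin (2^r) → ZMod (2^k))).ncard :=
        Nat.card_coe_set_eq _
    _ = ((fun z : Fin (2^r) → ZMod (2^k) =>
          (Sum.elim (fun _ => z i0) (fun p => z (iE p) - z i0) : colIdx k I → ZMod (2^k)))
          '' (D : Set _)).ncard := (Set.ncard_image_of_injOn hinj).symm
    _ = ((fun ai : ZMod (2^k) × Fin (2^r) =>
          (Sum.elim (fun _ => ai.1) (fun p => b ai.2 (Sum.inr p)) : colIdx k I → ZMod (2^k)))
          '' Set.univ).ncard := by rw [himg]
    _ = (Set.univ : Set (ZMod (2^k) × Fin (2^r))).ncard :=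
        Set.ncard_image_of_injective _ hχinj
    _ = Nat.card (ZMod (2^k) × Fin (2^r)) := Set.ncard_univ _
    _ = 2^k * 2^r := by
        rw [Nat.card_eq_fintype_card, Fintype.card_prod, ZMod.card, Fintype.card_fin]
    _ = 2^r * 2^k := mul_comm _ _


lemma hamming_prod {n m : ℕ} (u v : Fin n × Fin m → ZMod 2) :
    hammingDist u v = ∑ i, hammingDist (fun j => u (i, j)) (fun j => v (i, j)) := by
  simp only [hammingDist, Finset.card_filter, Fintype.sum_prod_type]

lemma wt_le_ham (hk : 2 ≤ k) (a : ZMod (2 ^ k) → Fin (2 ^ (k - 1)) → ZMod 2)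
    (ha_compl : ∀ x : ZMod (2 ^ k), a (x + (2 ^ (k - 1) : ZMod (2 ^ k))) = a x + 1)
    (ha_dist : ∀ x y : ZMod (2 ^ k), x ≠ y → 2 ^ (k - 2) ≤ hammingDist (a x) (a y))
    (x y : ZMod (2 ^ k)) : wtStarK k (y - x) ≤ hammingDist (a x) (a y) := by
  unfold wtStarK
  by_cases h0 : y - x = 0
  · simp [h0]
  · by_cases hh : y - x = (2 : ZMod (2^k)) ^ (k - 1)
    · rw [if_neg h0, if_pos hh]
      have hy : y = x + (2 : ZMod (2^k)) ^ (k - 1) := by rw [← hh]; ring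
      rw [hy, ha_compl]
      have hne : ∀ j, a x j ≠ (a x + 1) j := by
        intro j hje
        rw [Pi.add_apply, Pi.one_apply, left_eq_add] at hje
        exact one_ne_zero hje
      unfold hammingDist
      rw [Finset.filter_true_of_mem (fun j _ => hne j)]
      simp
    · rw [if_neg h0, if_neg hh]
      exact ha_dist x y (Ne.symm (sub_ne_zero.mp h0))

end

set_option maxHeartbeats 1000000 in
/-- The code `D_I = H_I^⊥ ⊆ Z_{2^k}^n` generated by the rows of `B_I` is a linear
`(n, n·2^k, n·2^{k-2})*` code; consequently its Gray image `φ(D_I)` is a binary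
Hadamard `(n·2^{k-1}, n·2^k, n·2^{k-2})` code. -/
theorem stmt_16 (k r : ℕ) (hk : 2 ≤ k) (I : Fin k → ℕ)
    (hI : ∑ j, (j.val + 1) * I j = r)
    (b : Fin (2 ^ r) → colIdx k I → ZMod (2 ^ k))
    (hb_inj : Function.Injective b)
    (hb_range : Set.range b = colSet k I)
    (a : ZMod (2 ^ k) → Fin (2 ^ (k - 1)) → ZMod 2)
    (ha_inj : Function.Injective a)
    (ha_zero : a 0 = 0)
    (ha_compl : ∀ x : ZMod (2 ^ k), a (x + (2 ^ (k - 1) : ZMod (2 ^ k))) = a x + 1)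
    (ha_dist : ∀ x y : ZMod (2 ^ k), x ≠ y → 2 ^ (k - 2) ≤ hammingDist (a x) (a y)) :
    (Nat.card (Submodule.span (ZMod (2 ^ k))
        (Set.range fun t : colIdx k I => fun i : Fin (2 ^ r) => b i t))
        = 2 ^ r * 2 ^ k) ∧
    (∀ x ∈ Submodule.span (ZMod (2 ^ k))
        (Set.range fun t : colIdx k I => fun i : Fin (2 ^ r) => b i t),
      ∀ y ∈ Submodule.span (ZMod (2 ^ k))
        (Set.range fun t : colIdx k I => fun i : Fin (2 ^ r) => b i t),
        x ≠ y → 2 ^ r * 2 ^ (k - 2) ≤ dStarK k (2 ^ r) x y) ∧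
    (((fun (x : Fin (2 ^ r) → ZMod (2 ^ k)) (p : Fin (2 ^ r) × Fin (2 ^ (k - 1))) =>
          a (x p.1) p.2) ''
        (Submodule.span (ZMod (2 ^ k))
          (Set.range fun t : colIdx k I => fun i : Fin (2 ^ r) => b i t) :
            Set (Fin (2 ^ r) → ZMod (2 ^ k)))).ncard = 2 ^ r * 2 ^ k ∧
      ∀ u ∈ (fun (x : Fin (2 ^ r) → ZMod (2 ^ k))
              (p : Fin (2 ^ r) × Fin (2 ^ (k - 1))) => a (x p.1) p.2) ''
            (Submodule.span (ZMod (2 ^ k))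
              (Set.range fun t : colIdx k I => fun i : Fin (2 ^ r) => b i t) :
                Set (Fin (2 ^ r) → ZMod (2 ^ k))),
        ∀ v ∈ (fun (x : Fin (2 ^ r) → ZMod (2 ^ k))
              (p : Fin (2 ^ r) × Fin (2 ^ (k - 1))) => a (x p.1) p.2) ''
            (Submodule.span (ZMod (2 ^ k))
              (Set.range fun t : colIdx k I => fun i : Fin (2 ^ r) => b i t) :
                Set (Fin (2 ^ r) → ZMod (2 ^ k))),
          u ≠ v → 2 ^ r * 2 ^ (k - 2) ≤ hammingDist u v) := by
  classical
  have part1 := card_D b hk hb_inj hb_range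
  have part2 : ∀ x ∈ Submodule.span (ZMod (2 ^ k))
      (Set.range fun t : colIdx k I => fun i : Fin (2 ^ r) => b i t),
      ∀ y ∈ Submodule.span (ZMod (2 ^ k))
      (Set.range fun t : colIdx k I => fun i : Fin (2 ^ r) => b i t),
      x ≠ y → 2 ^ r * 2 ^ (k - 2) ≤ dStarK k (2 ^ r) x y := by
    intro x hx y hy hxy
    have hzmem : y - x ∈ Submodule.span (ZMod (2 ^ k))
        (Set.range fun t : colIdx k I => fun i : Fin (2 ^ r) => b i t) :=
      Submodule.sub_mem _ hy hx
    have hz0 : y - x ≠ 0 := sub_ne_zero.mpr (Ne.symm hxy)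
    have h := min_dist b hk hb_inj hb_range hzmem hz0
    exact h
  refine ⟨part1, part2, ?_, ?_⟩
  · have hφinj : Function.Injective
        (fun (x : Fin (2 ^ r) → ZMod (2 ^ k))
            (p : Fin (2 ^ r) × Fin (2 ^ (k - 1))) => a (x p.1) p.2) := by
      intro x y h
      funext i
      apply ha_inj
      funext j
      exact congrFun h (i, j)
    rw [Set.ncard_image_of_injective _ hφinj, ← Nat.card_coe_set_eq]
    exact part1
  · rintro u ⟨x, hx, rfl⟩ v ⟨y, hy, rfl⟩ huv
    have hxy : x ≠ y := fun h => huv (by rw [h])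
    have h2 := part2 x hx y hy hxy
    calc 2 ^ r * 2 ^ (k - 2) ≤ dStarK k (2 ^ r) x y := h2
      _ ≤ ∑ i, hammingDist (a (x i)) (a (y i)) := by
          unfold dStarK
          exact Finset.sum_le_sum
            (fun i _ => wt_le_ham hk a ha_compl ha_dist (x i) (y i))
      _ = hammingDist (fun p : Fin (2 ^ r) × Fin (2 ^ (k - 1)) => a (x p.1) p.2)
            (fun p : Fin (2 ^ r) × Fin (2 ^ (k - 1)) => a (y p.1) p.2) := by
          rw [hamming_prod]
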